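/- arXiv:1701.02473 — 2 statements merged into one kernel-verified Lean document; each statement's English description precedes it below -/
import Mathlib

section
/- The gradient of t ↦ ln(Σ_{p∈P} exp(−⟨θ_p, t⟩)) is Lipschitz continuous with respect to the Euclidean norm, with Lipschitz constant at most max_{p∈P} ‖θ_p‖₂². -/
open Finset Real

noncomputable section LSEAux

set_option linter.unusedSectionVars false

variable {P : Type*} [Fintype P] [Nonempty P] {n : ℕ}

namespace LSEAux

variable (θ : P → EuclideanSpace ℝ (Fin n))

/-- exponential weights -/
def e (t : EuclideanSpace ℝ (Fin n)) (p : P) : ℝ := Real.exp (-(inner ℝ (θ p) t : ℝ))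

def Z (t : EuclideanSpace ℝ (Fin n)) : ℝ := ∑ p, e θ t p

def A (t : EuclideanSpace ℝ (Fin n)) : EuclideanSpace ℝ (Fin n) := ∑ p, e θ t p • θ p

def g (t : EuclideanSpace ℝ (Fin n)) : EuclideanSpace ℝ (Fin n) := -((Z θ t)⁻¹ • A θ t)

def ζ (t : EuclideanSpace ℝ (Fin n)) : EuclideanSpace ℝ (Fin n) →L[ℝ] ℝ :=
  ∑ p, (-(e θ t p)) • innerSL ℝ (θ p)

def B (t : EuclideanSpace ℝ (Fin n)) :
    EuclideanSpace ℝ (Fin n) →L[ℝ] EuclideanSpace ℝ (Fin n) :=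
  ∑ p, ((-(e θ t p)) • innerSL ℝ (θ p)).smulRight (θ p)

def H (t : EuclideanSpace ℝ (Fin n)) :
    EuclideanSpace ℝ (Fin n) →L[ℝ] EuclideanSpace ℝ (Fin n) :=
  -((Z θ t)⁻¹ • B θ t) + (((Z θ t) ^ 2)⁻¹ • ζ θ t).smulRight (A θ t)

lemma e_pos (t : EuclideanSpace ℝ (Fin n)) (p : P) : 0 < e θ t p := Real.exp_pos _

lemma Z_pos (t : EuclideanSpace ℝ (Fin n)) : 0 < Z θ t :=
  Finset.sum_pos (fun p _ => e_pos θ t p) Finset.univ_nonempty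

lemma hasFDerivAt_e (t : EuclideanSpace ℝ (Fin n)) (p : P) :
    HasFDerivAt (fun s => e θ s p) ((-(e θ t p)) • innerSL ℝ (θ p)) t := by
  have h1 : HasFDerivAt (fun s : EuclideanSpace ℝ (Fin n) => (inner ℝ (θ p) s : ℝ))
      (innerSL ℝ (θ p)) t := (innerSL ℝ (θ p)).hasFDerivAt
  have h2 := (h1.neg).exp
  simpa [e, neg_smul, smul_neg] using h2

lemma hasFDerivAt_Z (t : EuclideanSpace ℝ (Fin n)) :
    HasFDerivAt (Z θ) (ζ θ t) t := by
  exact HasFDerivAt.fun_sum (fun p _ => hasFDerivAt_e θ t p)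

lemma hasFDerivAt_A (t : EuclideanSpace ℝ (Fin n)) :
    HasFDerivAt (A θ) (B θ t) t := by
  refine HasFDerivAt.fun_sum (fun p _ => ?_)
  have := (hasFDerivAt_e θ t p).fun_smul (hasFDerivAt_const (θ p) t)
  simpa using this

lemma hasGradientAt_f (t : EuclideanSpace ℝ (Fin n)) :
    HasGradientAt (fun s : EuclideanSpace ℝ (Fin n) =>
      Real.log (∑ p, Real.exp (-(inner ℝ (θ p) s : ℝ)))) (g θ t) t := by
  rw [hasGradientAt_iff_hasFDerivAt]
  have hZ : HasFDerivAt (Z θ) (ζ θ t) t := hasFDerivAt_Z θ t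
  have hlog := hZ.log (ne_of_gt (Z_pos θ t))
  have heq : (InnerProductSpace.toDual ℝ (EuclideanSpace ℝ (Fin n))) (g θ t)
      = (Z θ t)⁻¹ • ζ θ t := by
    ext v
    simp only [InnerProductSpace.toDual_apply_apply, g, ζ, ContinuousLinearMap.smul_apply,
      ContinuousLinearMap.sum_apply, innerSL_apply_apply, A]
    rw [inner_neg_left, real_inner_smul_left, sum_inner]
    simp only [real_inner_smul_left, smul_eq_mul, Finset.mul_sum, neg_mul,
      Finset.mul_sum, ← Finset.sum_neg_distrib]
    exact Finset.sum_congr rfl fun p _ => by ring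
  rw [heq]
  exact hlog

lemma hasFDerivAt_g (t : EuclideanSpace ℝ (Fin n)) :
    HasFDerivAt (g θ) (H θ t) t := by
  have hZ : HasFDerivAt (Z θ) (ζ θ t) t := hasFDerivAt_Z θ t
  have hinv : HasFDerivAt (fun s => (Z θ s)⁻¹) ((-((Z θ t) ^ 2)⁻¹) • ζ θ t) t := by
    have := (hasDerivAt_inv (ne_of_gt (Z_pos θ t))).comp_hasFDerivAt t hZ
    exact this
  have hneg : HasFDerivAt (fun s => -(Z θ s)⁻¹) (((Z θ t) ^ 2)⁻¹ • ζ θ t) t := by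
    have h' := hinv.fun_neg
    have e2 : ((Z θ t) ^ 2)⁻¹ • ζ θ t = -((-((Z θ t) ^ 2)⁻¹) • ζ θ t) := by
      ext v
      simp
    rw [e2]
    exact h'
  have := hneg.fun_smul (hasFDerivAt_A θ t)
  unfold g H
  simpa [neg_smul] using this

/-- Covariance Cauchy-Schwarz bound. -/
lemma cov_bound {ι : Type*} [Fintype ι] (w X Y : ι → ℝ) (hw : ∀ p, 0 ≤ w p)
    (hw1 : ∑ p, w p = 1) {a b : ℝ} (ha : 0 ≤ a) (hb : 0 ≤ b)
    (hX : ∑ p, w p * X p ^ 2 ≤ a ^ 2) (hY : ∑ p, w p * Y p ^ 2 ≤ b ^ 2) :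
    |(∑ p, w p * (X p * Y p)) - (∑ p, w p * X p) * (∑ p, w p * Y p)| ≤ a * b := by
  set Xb := ∑ p, w p * X p with hXb
  set Yb := ∑ p, w p * Y p with hYb
  have hD : (∑ p, w p * (X p * Y p)) - Xb * Yb
      = ∑ p, w p * ((X p - Xb) * (Y p - Yb)) := by
    have : ∀ p, w p * ((X p - Xb) * (Y p - Yb))
        = w p * (X p * Y p) - (w p * X p) * Yb - Xb * (w p * Y p) + w p * (Xb * Yb) := by
      intro p; ring
    simp only [this, Finset.sum_add_distrib, Finset.sum_sub_distrib, ← Finset.sum_mul,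
      ← Finset.mul_sum, ← hXb, ← hYb, hw1]
    ring
  have hvarX : ∑ p, w p * (X p - Xb) ^ 2 ≤ a ^ 2 := by
    have : ∑ p, w p * (X p - Xb) ^ 2 = (∑ p, w p * X p ^ 2) - Xb ^ 2 := by
      have : ∀ p, w p * (X p - Xb) ^ 2
          = w p * X p ^ 2 - 2 * ((w p * X p) * Xb) + w p * Xb ^ 2 := by intro p; ring
      simp only [this, Finset.sum_add_distrib, Finset.sum_sub_distrib, ← Finset.sum_mul,
        ← Finset.mul_sum, ← hXb, hw1]
      ring
    rw [this]
    have := sq_nonneg Xb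
    linarith
  have hvarY : ∑ p, w p * (Y p - Yb) ^ 2 ≤ b ^ 2 := by
    have : ∑ p, w p * (Y p - Yb) ^ 2 = (∑ p, w p * Y p ^ 2) - Yb ^ 2 := by
      have : ∀ p, w p * (Y p - Yb) ^ 2
          = w p * Y p ^ 2 - 2 * ((w p * Y p) * Yb) + w p * Yb ^ 2 := by intro p; ring
      simp only [this, Finset.sum_add_distrib, Finset.sum_sub_distrib, ← Finset.sum_mul,
        ← Finset.mul_sum, ← hYb, hw1]
      ring
    rw [this]
    have := sq_nonneg Yb
    linarith
  -- Cauchy-Schwarz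
  have hCS : (∑ p, w p * ((X p - Xb) * (Y p - Yb))) ^ 2
      ≤ (∑ p, w p * (X p - Xb) ^ 2) * (∑ p, w p * (Y p - Yb) ^ 2) := by
    have key := Finset.sum_mul_sq_le_sq_mul_sq Finset.univ
      (fun p => Real.sqrt (w p) * (X p - Xb)) (fun p => Real.sqrt (w p) * (Y p - Yb))
    have h1 : ∀ p : ι, (Real.sqrt (w p) * (X p - Xb)) * (Real.sqrt (w p) * (Y p - Yb))
        = w p * ((X p - Xb) * (Y p - Yb)) := by
      intro p
      rw [show (Real.sqrt (w p) * (X p - Xb)) * (Real.sqrt (w p) * (Y p - Yb))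
        = (Real.sqrt (w p) * Real.sqrt (w p)) * ((X p - Xb) * (Y p - Yb)) by ring,
        Real.mul_self_sqrt (hw p)]
    have h2 : ∀ p : ι, (Real.sqrt (w p) * (X p - Xb)) ^ 2 = w p * (X p - Xb) ^ 2 := by
      intro p
      rw [mul_pow, Real.sq_sqrt (hw p)]
    have h3 : ∀ p : ι, (Real.sqrt (w p) * (Y p - Yb)) ^ 2 = w p * (Y p - Yb) ^ 2 := by
      intro p
      rw [mul_pow, Real.sq_sqrt (hw p)]
    simpa only [h1, h2, h3] using key
  rw [hD]
  have habs : |∑ p, w p * ((X p - Xb) * (Y p - Yb))| ^ 2 ≤ (a * b) ^ 2 := by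
    rw [sq_abs]
    calc (∑ p, w p * ((X p - Xb) * (Y p - Yb))) ^ 2
        ≤ (∑ p, w p * (X p - Xb) ^ 2) * (∑ p, w p * (Y p - Yb) ^ 2) := hCS
      _ ≤ a ^ 2 * b ^ 2 := by
          apply mul_le_mul hvarX hvarY (Finset.sum_nonneg fun p _ =>
            mul_nonneg (hw p) (sq_nonneg _)) (sq_nonneg a)
      _ = (a * b) ^ 2 := by ring
  exact (pow_le_pow_iff_left₀ (abs_nonneg _) (mul_nonneg ha hb) two_ne_zero).mp habs

lemma inner_H (t u v : EuclideanSpace ℝ (Fin n)) :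
    (inner ℝ u (H θ t v) : ℝ)
      = (∑ p, (e θ t p / Z θ t) * ((inner ℝ (θ p) u : ℝ) * (inner ℝ (θ p) v : ℝ)))
        - (∑ p, (e θ t p / Z θ t) * (inner ℝ (θ p) u : ℝ))
          * (∑ p, (e θ t p / Z θ t) * (inner ℝ (θ p) v : ℝ)) := by
  simp only [H, B, ζ, A, ContinuousLinearMap.add_apply, ContinuousLinearMap.neg_apply,
    ContinuousLinearMap.smul_apply, ContinuousLinearMap.sum_apply,
    ContinuousLinearMap.smulRight_apply, innerSL_apply_apply, smul_eq_mul,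
    inner_add_right, inner_neg_right, real_inner_smul_right, inner_sum, div_eq_mul_inv]
  have comm : ∀ x : P, (inner ℝ u (θ x) : ℝ) = inner ℝ (θ x) u := fun x => (real_inner_comm u (θ x)).symm
  set c := (Z θ t)⁻¹ with hc
  have hpull : ∀ f : P → ℝ, ∑ x, e θ t x * c * f x = c * ∑ x, e θ t x * f x := by
    intro f; rw [Finset.mul_sum]; exact Finset.sum_congr rfl fun x _ => by ring
  have hsq : ((Z θ t) ^ 2)⁻¹ = c * c := by rw [sq, mul_inv]
  rw [hsq, hpull (fun x => (inner ℝ (θ x) u : ℝ) * (inner ℝ (θ x) v : ℝ)),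
    hpull (fun x => (inner ℝ (θ x) u : ℝ)), hpull (fun x => (inner ℝ (θ x) v : ℝ))]
  simp only [comm, neg_mul, Finset.sum_neg_distrib, mul_neg, neg_neg]
  have h1 : ∑ x, e θ t x * (inner ℝ (θ x) v : ℝ) * (inner ℝ (θ x) u : ℝ)
      = ∑ x, e θ t x * ((inner ℝ (θ x) u : ℝ) * (inner ℝ (θ x) v : ℝ)) :=
    Finset.sum_congr rfl fun x _ => by ring
  rw [h1]; ring

lemma sum_w_eq_one (t : EuclideanSpace ℝ (Fin n)) : ∑ p, e θ t p / Z θ t = 1 := by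
  rw [← Finset.sum_div, show (∑ i, e θ t i) = Z θ t from rfl, div_self (ne_of_gt (Z_pos θ t))]

lemma inner_H_le (L : ℝ) (hL : 0 ≤ L) (hLb : ∀ p, ‖θ p‖ ^ 2 ≤ L)
    (t u v : EuclideanSpace ℝ (Fin n)) :
    |(inner ℝ u (H θ t v) : ℝ)| ≤ L * (‖u‖ * ‖v‖) := by
  rw [inner_H]
  have hw : ∀ p, 0 ≤ e θ t p / Z θ t :=
    fun p => div_nonneg (e_pos θ t p).le (Z_pos θ t).le
  have key : ∀ z : EuclideanSpace ℝ (Fin n),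
      ∑ p, (e θ t p / Z θ t) * (inner ℝ (θ p) z : ℝ) ^ 2 ≤ (Real.sqrt L * ‖z‖) ^ 2 := by
    intro z
    have h1 : ∀ p : P, (inner ℝ (θ p) z : ℝ) ^ 2 ≤ L * ‖z‖ ^ 2 := by
      intro p
      have h2 : |(inner ℝ (θ p) z : ℝ)| ≤ ‖θ p‖ * ‖z‖ := abs_real_inner_le_norm (θ p) z
      have h3 : (inner ℝ (θ p) z : ℝ) ^ 2 ≤ (‖θ p‖ * ‖z‖) ^ 2 := by
        rw [← sq_abs]
        exact pow_le_pow_left₀ (abs_nonneg _) h2 2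
      calc (inner ℝ (θ p) z : ℝ) ^ 2 ≤ (‖θ p‖ * ‖z‖) ^ 2 := h3
        _ = ‖θ p‖ ^ 2 * ‖z‖ ^ 2 := by ring
        _ ≤ L * ‖z‖ ^ 2 := mul_le_mul_of_nonneg_right (hLb p) (sq_nonneg _)
    calc ∑ p, (e θ t p / Z θ t) * (inner ℝ (θ p) z : ℝ) ^ 2
        ≤ ∑ p, (e θ t p / Z θ t) * (L * ‖z‖ ^ 2) :=
          Finset.sum_le_sum fun p _ => mul_le_mul_of_nonneg_left (h1 p) (hw p)
      _ = (∑ p, e θ t p / Z θ t) * (L * ‖z‖ ^ 2) := by rw [Finset.sum_mul]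
      _ = L * ‖z‖ ^ 2 := by rw [sum_w_eq_one]; ring
      _ = (Real.sqrt L * ‖z‖) ^ 2 := by rw [mul_pow, Real.sq_sqrt hL]
  have hab : Real.sqrt L * ‖u‖ * (Real.sqrt L * ‖v‖) = L * (‖u‖ * ‖v‖) := by
    rw [show Real.sqrt L * ‖u‖ * (Real.sqrt L * ‖v‖)
      = Real.sqrt L * Real.sqrt L * (‖u‖ * ‖v‖) by ring, Real.mul_self_sqrt hL]
  rw [← hab]
  exact cov_bound (fun p => e θ t p / Z θ t) (fun p => (inner ℝ (θ p) u : ℝ))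
    (fun p => (inner ℝ (θ p) v : ℝ)) hw (sum_w_eq_one θ t)
    (mul_nonneg (Real.sqrt_nonneg _) (norm_nonneg _))
    (mul_nonneg (Real.sqrt_nonneg _) (norm_nonneg _)) (key u) (key v)

lemma H_norm_le (L : ℝ) (hL : 0 ≤ L) (hLb : ∀ p, ‖θ p‖ ^ 2 ≤ L)
    (t : EuclideanSpace ℝ (Fin n)) : ‖H θ t‖ ≤ L := by
  refine ContinuousLinearMap.opNorm_le_bound _ hL (fun v => ?_)
  rcases eq_or_ne (H θ t v) 0 with h | h
  · rw [h, norm_zero]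
    exact mul_nonneg hL (norm_nonneg _)
  · have hpos : 0 < ‖H θ t v‖ := norm_pos_iff.mpr h
    have key := inner_H_le θ L hL hLb t (H θ t v) v
    rw [real_inner_self_eq_norm_sq] at key
    have key2 : ‖H θ t v‖ ^ 2 ≤ L * (‖H θ t v‖ * ‖v‖) := by
      calc ‖H θ t v‖ ^ 2 = |‖H θ t v‖ ^ 2| := (abs_of_nonneg (sq_nonneg _)).symm
        _ ≤ L * (‖H θ t v‖ * ‖v‖) := key
    nlinarith

end LSEAux

end LSEAux

theorem logsumexp_gradient_lipschitz {P : Type*} [Fintype P] [Nonempty P] (n : ℕ)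
    (θ : P → EuclideanSpace ℝ (Fin n)) :
    LipschitzWith
      (Real.toNNReal (Finset.univ.sup' Finset.univ_nonempty (fun p => ‖θ p‖ ^ 2)))
      (gradient (fun t : EuclideanSpace ℝ (Fin n) =>
        Real.log (∑ p, Real.exp (-(inner ℝ (θ p) t : ℝ))))) := by
  set L : ℝ := Finset.univ.sup' Finset.univ_nonempty (fun p => ‖θ p‖ ^ 2) with hLdef
  have hLb : ∀ p, ‖θ p‖ ^ 2 ≤ L := fun p => Finset.le_sup' (fun q => ‖θ q‖ ^ 2) (Finset.mem_univ p)
  have hL : 0 ≤ L :=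
    le_trans (sq_nonneg ‖θ (Classical.arbitrary P)‖) (hLb (Classical.arbitrary P))
  have hgrad : gradient (fun t : EuclideanSpace ℝ (Fin n) =>
      Real.log (∑ p, Real.exp (-(inner ℝ (θ p) t : ℝ)))) = LSEAux.g θ :=
    gradient_eq (fun t => LSEAux.hasGradientAt_f θ t)
  rw [hgrad]
  apply lipschitzWith_of_nnnorm_fderiv_le (𝕜 := ℝ)
  · exact fun t => (LSEAux.hasFDerivAt_g θ t).differentiableAt
  · intro t
    rw [(LSEAux.hasFDerivAt_g θ t).fderiv, ← NNReal.coe_le_coe, coe_nnnorm,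
      Real.coe_toNNReal _ hL]
    exact LSEAux.H_norm_le θ L hL hLb t
end

section
/- Suppose the sequence (t^N) produced by a primal-dual method satisfies A_N F(t^N) ≤ min_{t∈Q} { ½‖t − y⁰‖₂² + Σ_{k=0}^N α_k [Φ(y^k) + ⟨∇Φ(y^k), t − y^k⟩ + h(t)] } + ε·A_N/2, where F = Φ + h with Φ convex differentiable and h convex, Q convex, A_N = Σ_k α_k > 0, α_k ≥ 0. Then F(t^N) − F(t*) ≤ R²/A_N + ε/2, where t* ∈ argmin_{t∈Q} F and R² = ½‖t* − y⁰‖₂². -/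
open Real

lemma grad_convex_ineq {n : ℕ} (Φ : EuclideanSpace ℝ (Fin n) → ℝ)
    (hΦ : ConvexOn ℝ Set.univ Φ) {g y t : EuclideanSpace ℝ (Fin n)}
    (hg : HasGradientAt Φ g y) :
    Φ y + (inner ℝ g (t - y) : ℝ) ≤ Φ t := by
  set v := t - y with hv
  set c : ℝ → EuclideanSpace ℝ (Fin n) := ⇑(AffineMap.lineMap y t : ℝ →ᵃ[ℝ] EuclideanSpace ℝ (Fin n)) with hc
  have hceq : ∀ s, c s = s • v + y := by
    intro s; simp [hc, AffineMap.lineMap_apply, hv]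
  have hcd : HasDerivAt c v 0 := by
    have : HasDerivAt (fun s : ℝ => s • v + y) v 0 := by
      simpa using ((hasDerivAt_id (0 : ℝ)).smul_const v).add_const y
    exact this.congr_of_eventuallyEq (Filter.Eventually.of_forall hceq)
  have hF : HasFDerivAt Φ (InnerProductSpace.toDual ℝ _ g) y :=
    hasGradientAt_iff_hasFDerivAt.mp hg
  have hc0 : c 0 = y := by simp [hceq]
  have hcomp : HasDerivAt (Φ ∘ c) ((inner ℝ g v : ℝ)) 0 := by
    have hF' : HasFDerivAt Φ (InnerProductSpace.toDual ℝ _ g) (c 0) := by rw [hc0]; exact hF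
    simpa [InnerProductSpace.toDual_apply_apply] using hF'.comp_hasDerivAt 0 hcd
  have hconv : ConvexOn ℝ Set.univ (Φ ∘ c) := by
    simpa using hΦ.comp_affineMap (AffineMap.lineMap y t : ℝ →ᵃ[ℝ] EuclideanSpace ℝ (Fin n))
  have hslope := hconv.le_slope_of_hasDerivAt (x := (0:ℝ)) (y := 1) trivial trivial
    one_pos hcomp
  have h1 : (inner ℝ g v : ℝ) ≤ Φ (c 1) - Φ (c 0) := by
    simpa [slope_def_field] using hslope
  have hc1 : c 1 = t := by simp [hceq, hv]
  rw [hc0, hc1] at h1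
  linarith

theorem umst_primal_dual_convergence {n : ℕ}
    (Φ : EuclideanSpace ℝ (Fin n) → ℝ) (h : EuclideanSpace ℝ (Fin n) → ℝ)
    (Q : Set (EuclideanSpace ℝ (Fin n)))
    (hQ : Convex ℝ Q)
    (hΦ : ConvexOn ℝ Set.univ Φ) (hh : ConvexOn ℝ Set.univ h)
    (gΦ : ℕ → EuclideanSpace ℝ (Fin n))
    (y0 : EuclideanSpace ℝ (Fin n)) (hy0 : y0 ∈ Q)
    (y : ℕ → EuclideanSpace ℝ (Fin n)) (hy : ∀ k, y k ∈ Q)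
    (hgrad : ∀ k, HasGradientAt Φ (gΦ k) (y k))
    (N : ℕ) (α : ℕ → ℝ) (hα : ∀ k, 0 ≤ α k)
    (A : ℝ) (hA : A = ∑ k ∈ Finset.range (N+1), α k) (hApos : 0 < A)
    (tN : EuclideanSpace ℝ (Fin n)) (htN : tN ∈ Q)
    (ε : ℝ) (hε : 0 ≤ ε)
    (hkey : ∀ t ∈ Q,
      A * (Φ tN + h tN) ≤
        (1/2) * ‖t - y0‖^2 +
          (∑ k ∈ Finset.range (N+1),
            α k * (Φ (y k) + (inner ℝ (gΦ k) (t - y k) : ℝ) + h t)) + ε * A / 2)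
    (tstar : EuclideanSpace ℝ (Fin n)) (htstar : tstar ∈ Q)
    (hmin : ∀ t ∈ Q, Φ tstar + h tstar ≤ Φ t + h t) :
    (Φ tN + h tN) - (Φ tstar + h tstar) ≤ ((1/2) * ‖tstar - y0‖^2) / A + ε / 2 := by
  have hk := hkey tstar htstar
  have hsum : (∑ k ∈ Finset.range (N+1),
      α k * (Φ (y k) + (inner ℝ (gΦ k) (tstar - y k) : ℝ) + h tstar)) ≤
      ∑ k ∈ Finset.range (N+1), α k * (Φ tstar + h tstar) := by
    refine Finset.sum_le_sum fun k _ => ?_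
    have := grad_convex_ineq Φ hΦ (t := tstar) (hgrad k)
    exact mul_le_mul_of_nonneg_left (by linarith) (hα k)
  rw [← Finset.sum_mul] at hsum
  rw [← hA] at hsum
  have hmain : A * (Φ tN + h tN) ≤ (1/2) * ‖tstar - y0‖^2 + A * (Φ tstar + h tstar)
      + ε * A / 2 := by linarith
  rw [div_add' _ _ _ (ne_of_gt hApos), le_div_iff₀ hApos]
  nlinarith [hmain]
end
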